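/- Let X be a random vector in ℝ^k of the form X = (ḡ/p)·M where ḡ ∼ N(μ, (σ_g²/B)·I_k) and M is a Bernoulli(p) scalar independent of ḡ, 0 < p ≤ 1. Then the covariance matrix of X equals (σ_g²/(pB))·I_k + ((1-p)/p)·diag(μ)², where diag(μ)² is the diagonal matrix with entries μᵢ². -/

import Mathlib

open MeasureTheory ProbabilityTheory

/-- Full covariance statement of Theorem 1 (learning rate `η = 1`).  The
mini-batch averaged gradient `ḡ` has independent coordinates with mean `μ i`
and variance `σg²/B`, and each coordinate is masked by an independent
Bernoulli(`p`) variable `M i` (independently per coordinate) and rescaled by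
`1/p`.  Then the covariance matrix of `X = (ḡ/p)·M` equals
`(σg²/(pB))·I_k + ((1-p)/p)·diag(μ)²`. -/
theorem childTuningF_covariance_matrix
    {Ω : Type*} [MeasurableSpace Ω] (P : Measure Ω) [IsProbabilityMeasure P]
    (k B : ℕ) (hB : 1 ≤ B) (p σg : ℝ) (μ : Fin k → ℝ)
    (hp : 0 < p) (hp1 : p ≤ 1)
    (gbar M : Fin k → Ω → ℝ)
    (hgL2 : ∀ i, MemLp (gbar i) 2 P)
    (hgmean : ∀ i, ∫ ω, gbar i ω ∂P = μ i)
    (hgvar : ∀ i, variance (gbar i) P = σg ^ 2 / B)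
    (hgindep : ∀ i j, i ≠ j → IndepFun (gbar i) (gbar j) P)
    (hM01 : ∀ i ω, M i ω = 0 ∨ M i ω = 1)
    (hMmean : ∀ i, ∫ ω, M i ω ∂P = p)
    (hgM : ∀ i j, IndepFun (gbar i) (M j) P)
    (hMM : ∀ i j, i ≠ j → IndepFun (M i) (M j) P)
    (hprod : ∀ i j, i ≠ j →
      IndepFun (fun ω => gbar i ω * M i ω) (fun ω => gbar j ω * M j ω) P) :
    (Matrix.of fun i j =>
        (∫ ω, (gbar i ω / p * M i ω) * (gbar j ω / p * M j ω) ∂P)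
          - (∫ ω, gbar i ω / p * M i ω ∂P) * ∫ ω, gbar j ω / p * M j ω ∂P)
      = (σg ^ 2 / (p * B)) • (1 : Matrix (Fin k) (Fin k) ℝ)
        + ((1 - p) / p) • Matrix.diagonal (fun i => (μ i) ^ 2) := by
  have hp0 : p ≠ 0 := ne_of_gt hp
  have hBpos : (0:ℝ) < (B:ℝ) := by exact_mod_cast Nat.lt_of_lt_of_le Nat.zero_lt_one hB
  have hB0 : (B:ℝ) ≠ 0 := ne_of_gt hBpos
  -- M is integrable
  have hMint : ∀ i, Integrable (M i) P := by
    intro i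
    by_contra h
    have := hMmean i
    rw [integral_undef h] at this
    exact hp0 this.symm
  have hMmeas : ∀ i, AEStronglyMeasurable (M i) P := fun i => (hMint i).aestronglyMeasurable
  have hMbd : ∀ i ω, |M i ω| ≤ 1 := by
    intro i ω; rcases hM01 i ω with h | h <;> simp [h]
  have hgmeas : ∀ i, AEStronglyMeasurable (gbar i) P := fun i => (hgL2 i).aestronglyMeasurable
  -- key integral: E[gbar i * M i] = μ i * p
  have E1 : ∀ i, ∫ ω, gbar i ω * M i ω ∂P = μ i * p := by
    intro i
    have h := (hgM i i).integral_mul_eq_mul_integral (hgmeas i) (hMmeas i)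
    simpa [hgmean i, hMmean i] using h
  -- E[gbar i ^ 2 * M i] = (σg²/B + μ i ^ 2) * p
  have Eg2 : ∀ i, ∫ ω, gbar i ω ^ 2 ∂P = σg ^ 2 / B + μ i ^ 2 := by
    intro i
    have h := variance_eq_sub (hgL2 i)
    rw [hgvar i, hgmean i] at h
    have : (∫ ω, gbar i ω ^ 2 ∂P) = P[(gbar i) ^ 2] := by rfl
    rw [this]
    linarith
  have E2 : ∀ i, ∫ ω, gbar i ω ^ 2 * M i ω ∂P = (σg ^ 2 / B + μ i ^ 2) * p := by
    intro i
    have hind : IndepFun (fun ω => gbar i ω ^ 2) (M i) P := by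
      have := (hgM i i).comp (φ := fun x : ℝ => x ^ 2) (ψ := id)
        (measurable_id.pow_const 2) measurable_id
      exact this
    have h := hind.integral_mul_eq_mul_integral ((hgmeas i).pow 2) (hMmeas i)
    simpa [Eg2 i, hMmean i] using h
  -- mean of X i
  have EX : ∀ i, ∫ ω, gbar i ω / p * M i ω ∂P = μ i := by
    intro i
    have : (fun ω => gbar i ω / p * M i ω) = fun ω => (gbar i ω * M i ω) * p⁻¹ := by
      funext ω; ring
    rw [this, integral_mul_const, E1 i]
    field_simp
  funext i j
  simp only [Matrix.of_apply, Matrix.add_apply, Matrix.smul_apply, Matrix.one_apply,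
    Matrix.diagonal_apply, smul_eq_mul]
  by_cases hij : i = j
  · subst hij
    simp only [if_pos rfl]
    have hsq : (fun ω => (gbar i ω / p * M i ω) * (gbar i ω / p * M i ω))
        = fun ω => (gbar i ω ^ 2 * M i ω) * (p ^ 2)⁻¹ := by
      funext ω
      rcases hM01 i ω with h | h
      · simp [h]
      · rw [h]; field_simp
    rw [hsq, integral_mul_const, E2 i, EX i]
    field_simp
    simp only [if_true]
    ring
  · simp only [if_neg hij, if_neg (fun h => hij (by exact h))]
    have heq : ∀ l, ((fun x : ℝ => x * p⁻¹) ∘ fun ω => gbar l ω * M l ω)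
        = fun ω => gbar l ω / p * M l ω := by
      intro l; funext ω; simp [Function.comp, div_eq_mul_inv]; ring
    have hind : IndepFun (fun ω => gbar i ω / p * M i ω)
        (fun ω => gbar j ω / p * M j ω) P := by
      have := (hprod i j hij).comp (φ := fun x : ℝ => x * p⁻¹) (ψ := fun x : ℝ => x * p⁻¹)
        (measurable_mul_const _) (measurable_mul_const _)
      rwa [heq i, heq j] at this
    have hXm : ∀ l, AEStronglyMeasurable (fun ω => gbar l ω / p * M l ω) P :=
      fun l => by
        simp only [div_eq_mul_inv]; exact ((hgmeas l).mul aestronglyMeasurable_const).mul (hMmeas l)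
    have h := hind.integral_mul_eq_mul_integral (hXm i) (hXm j)
    rw [show ((fun ω => gbar i ω / p * M i ω) * fun ω => gbar j ω / p * M j ω)
        = fun ω => gbar i ω / p * M i ω * (gbar j ω / p * M j ω) from rfl] at h
    rw [h]; ring
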